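/- Fix N ∈ ℕ. Let Y₀ be a random variable with values in {0,…,N}, independent of (P,R), and let Y₁ be a random variable whose conditional distribution given (Y₀, P, R) = (k, p, r) is that of B₁ + B₂ with B₁, B₂ independent, B₁ ~ Binomial(k, r), B₂ ~ Binomial(N−k, 1−p). Assume Y₁ has the same distribution as Y₀. Then Cov(Y₀, Y₁) = (E[P] + E[R] − 1)·E[Y₀²] + (1 − E[P])·N·E[Y₀] − (E[Y₀])². -/

import Mathlib

open MeasureTheory ProbabilityTheory

/-- The probability mass function of the binomial distribution with `n` trials and success
probability `q`, evaluated at `j`. -/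
noncomputable def binomPMF (n : ℕ) (q : ℝ) (j : ℕ) : ℝ :=
  (n.choose j : ℝ) * q ^ j * (1 - q) ^ (n - j)

/-- The pmf at `m` of `B₁ + B₂` with `B₁ ~ Binomial(k, r)` and `B₂ ~ Binomial(N − k, 1 − p)`
independent. -/
noncomputable def convPMF (N k : ℕ) (p r : ℝ) (m : ℕ) : ℝ :=
  ∑ j ∈ Finset.range (m + 1), binomPMF k r j * binomPMF (N - k) (1 - p) (m - j)

lemma binomPMF_eq_zero {n j : ℕ} (h : n < j) (q : ℝ) : binomPMF n q j = 0 := by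
  simp [binomPMF, Nat.choose_eq_zero_of_lt h]

lemma binomPMF_sum (n : ℕ) (q : ℝ) : ∑ j ∈ Finset.range (n + 1), binomPMF n q j = 1 := by
  have h2 : ∑ j ∈ Finset.range (n + 1), binomPMF n q j = (q + (1 - q)) ^ n := by
    rw [add_pow]
    exact Finset.sum_congr rfl fun j _ => by unfold binomPMF; ring
  rw [h2]; norm_num

lemma binomPMF_mean (n : ℕ) (q : ℝ) :
    ∑ j ∈ Finset.range (n + 1), (j : ℝ) * binomPMF n q j = n * q := by
  cases n with
  | zero => simp [binomPMF]
  | succ m =>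
    rw [Finset.sum_range_succ']
    simp only [Nat.cast_zero, zero_mul, add_zero]
    have key : ∀ i ∈ Finset.range (m + 1),
        ((i + 1 : ℕ) : ℝ) * binomPMF (m + 1) q (i + 1)
          = ((m + 1 : ℕ) : ℝ) * q * binomPMF m q i := by
      intro i _
      have hc : (m + 1) * m.choose i = (m + 1).choose (i + 1) * (i + 1) :=
        Nat.add_one_mul_choose_eq m i
      have hc' : ((m + 1 : ℕ) : ℝ) * (m.choose i : ℝ)
          = ((m + 1).choose (i + 1) : ℝ) * ((i + 1 : ℕ) : ℝ) := by
        exact_mod_cast congrArg (Nat.cast : ℕ → ℝ) hc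
      simp only [binomPMF, Nat.succ_sub_succ]
      push_cast at hc' ⊢
      linear_combination (-(q ^ (i + 1) * (1 - q) ^ (m - i))) * hc'
    rw [Finset.sum_congr rfl key, ← Finset.mul_sum, binomPMF_sum]
    push_cast
    ring

lemma binomPMF_sum' (n L : ℕ) (h : n ≤ L) (q : ℝ) :
    ∑ i ∈ Finset.range (L + 1), binomPMF n q i = 1 := by
  rw [← binomPMF_sum n q]
  exact (Finset.sum_subset (Finset.range_subset_range.mpr (by omega))
    (fun i _ hi => binomPMF_eq_zero (by simp at hi ⊢; omega) q)).symm

lemma binomPMF_mean' (n L : ℕ) (h : n ≤ L) (q : ℝ) :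
    ∑ i ∈ Finset.range (L + 1), (i : ℝ) * binomPMF n q i = n * q := by
  rw [← binomPMF_mean n q]
  exact (Finset.sum_subset (Finset.range_subset_range.mpr (by omega))
    (fun i _ hi => by rw [binomPMF_eq_zero (by simp at hi ⊢; omega) q, mul_zero])).symm

lemma convPMF_eq_zero {N k m : ℕ} (hk : k ≤ N) (h : N < m) (p r : ℝ) :
    convPMF N k p r m = 0 := by
  apply Finset.sum_eq_zero
  intro j hj
  simp only [Finset.mem_range] at hj
  by_cases hjk : k < j
  · rw [binomPMF_eq_zero hjk]; ring
  · rw [binomPMF_eq_zero (show N - k < m - j by omega)]; ring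

lemma convPMF_mean (N k : ℕ) (hk : k ≤ N) (p r : ℝ) :
    ∑ m ∈ Finset.range (N + 1), (m : ℝ) * convPMF N k p r m
      = k * r + ((N - k : ℕ) : ℝ) * (1 - p) := by
  set a : ℕ → ℝ := binomPMF k r with ha
  set b : ℕ → ℝ := binomPMF (N - k) (1 - p) with hb
  have step1 : ∑ m ∈ Finset.range (N + 1), (m : ℝ) * convPMF N k p r m
      = ∑ m ∈ Finset.range (N + 1), ∑ j ∈ Finset.range (m + 1),
          (((j : ℝ) + ((m - j : ℕ) : ℝ)) * (a j * b (m - j))) := by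
    refine Finset.sum_congr rfl fun m _ => ?_
    rw [convPMF, Finset.mul_sum]
    refine Finset.sum_congr rfl fun j hj => ?_
    simp only [Finset.mem_range] at hj
    have : ((j : ℝ) + ((m - j : ℕ) : ℝ)) = (m : ℝ) := by
      have : j + (m - j) = m := by omega
      exact_mod_cast congrArg (Nat.cast : ℕ → ℝ) this
    rw [this]
  rw [step1, Finset.sum_range_diag_flip (N + 1) (fun j i => ((j : ℝ) + (i : ℝ)) * (a j * b i))]
  have step2 : ∑ m ∈ Finset.range (N + 1), ∑ k_1 ∈ Finset.range (N + 1 - m),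
        ((m : ℝ) + (k_1 : ℝ)) * (a m * b k_1)
      = ∑ j ∈ Finset.range (k + 1), ((j : ℝ) * a j + a j * (((N - k : ℕ) : ℝ) * (1 - p))) := by
    rw [← Finset.sum_subset (Finset.range_subset_range.mpr (by omega : k + 1 ≤ N + 1))
      (fun j _ hj => ?_)]
    · refine Finset.sum_congr rfl fun j hj => ?_
      simp only [Finset.mem_range] at hj
      have hjk : j ≤ k := by omega
      have hrange : N + 1 - j = (N - j) + 1 := by omega
      have hsub : N - k ≤ N - j := by omega
      rw [hrange]
      have e1 : ∑ i ∈ Finset.range (N - j + 1), ((j : ℝ) + (i : ℝ)) * (a j * b i)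
          = (j : ℝ) * a j * (∑ i ∈ Finset.range (N - j + 1), b i)
            + a j * (∑ i ∈ Finset.range (N - j + 1), (i : ℝ) * b i) := by
        rw [Finset.mul_sum, Finset.mul_sum, ← Finset.sum_add_distrib]
        exact Finset.sum_congr rfl fun i _ => by ring
      rw [e1, hb, binomPMF_sum' _ _ hsub, binomPMF_mean' _ _ hsub, mul_one]
    · -- terms with j > k vanish
      simp only [Finset.mem_range] at hj
      apply Finset.sum_eq_zero
      intro i _
      rw [ha, binomPMF_eq_zero (show k < j by omega)]; ring
  rw [step2, Finset.sum_add_distrib, ← Finset.sum_mul, ha, binomPMF_mean, binomPMF_sum, one_mul]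

lemma binomPMF_nonneg {q : ℝ} (h0 : 0 ≤ q) (h1 : q ≤ 1) (n j : ℕ) : 0 ≤ binomPMF n q j := by
  have h2 : (0:ℝ) ≤ 1 - q := by linarith
  unfold binomPMF
  positivity

lemma binomPMF_le_one {q : ℝ} (h0 : 0 ≤ q) (h1 : q ≤ 1) (n j : ℕ) : binomPMF n q j ≤ 1 := by
  rcases le_or_gt j n with hj | hj
  · calc binomPMF n q j ≤ ∑ i ∈ Finset.range (n+1), binomPMF n q i :=
        Finset.single_le_sum (fun i _ => binomPMF_nonneg h0 h1 n i)
          (Finset.mem_range.mpr (by omega))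
      _ = 1 := binomPMF_sum n q
  · rw [binomPMF_eq_zero hj]; norm_num

lemma convPMF_nonneg {p r : ℝ} (hp0 : 0 ≤ p) (hp1 : p ≤ 1) (hr0 : 0 ≤ r) (hr1 : r ≤ 1)
    (N k m : ℕ) : 0 ≤ convPMF N k p r m :=
  Finset.sum_nonneg fun j _ => mul_nonneg (binomPMF_nonneg hr0 hr1 _ _)
    (binomPMF_nonneg (by linarith) (by linarith) _ _)

lemma convPMF_le_one {p r : ℝ} (hp0 : 0 ≤ p) (hp1 : p ≤ 1) (hr0 : 0 ≤ r) (hr1 : r ≤ 1)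
    (N k m : ℕ) : convPMF N k p r m ≤ 1 := by
  calc convPMF N k p r m
      ≤ ∑ j ∈ Finset.range (m+1), binomPMF k r j := by
        refine Finset.sum_le_sum fun j _ => ?_
        calc binomPMF k r j * binomPMF (N-k) (1-p) (m-j)
            ≤ binomPMF k r j * 1 :=
              mul_le_mul_of_nonneg_left
                (binomPMF_le_one (by linarith) (by linarith) _ _)
                (binomPMF_nonneg hr0 hr1 _ _)
          _ = binomPMF k r j := mul_one _
    _ ≤ ∑ j ∈ Finset.range (max m k + 1), binomPMF k r j :=
        Finset.sum_le_sum_of_subset_of_nonneg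
          (Finset.range_subset_range.mpr (by omega))
          (fun j _ _ => binomPMF_nonneg hr0 hr1 _ _)
    _ = 1 := binomPMF_sum' k (max m k) (le_max_right _ _) r

/-- In the stationary resampling model,
`Cov(Y₀, Y₁) = (E[P] + E[R] − 1)·E[Y₀²] + (1 − E[P])·N·E[Y₀] − (E[Y₀])²`. -/
theorem stmt_19
    {Ω : Type*} [MeasurableSpace Ω] (μ : Measure Ω) [IsProbabilityMeasure μ]
    (P R : Ω → ℝ) (hP : Measurable P) (hR : Measurable R)
    (hPR : ∀ᵐ ω ∂μ, P ω ∈ Set.Ioo (0 : ℝ) 1 ∧ R ω ∈ Set.Ioo (0 : ℝ) 1)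
    (N : ℕ) (Y₀ Y₁ : Ω → ℕ) (hY₀ : Measurable Y₀) (hY₁ : Measurable Y₁)
    (hY₀N : ∀ ω, Y₀ ω ≤ N)
    (hindep : IndepFun Y₀ (fun ω => (P ω, R ω)) μ)
    (hcond : ∀ (m : ℕ) (s : Set (ℕ × ℝ × ℝ)), MeasurableSet s →
      (μ {ω | Y₁ ω = m ∧ (Y₀ ω, P ω, R ω) ∈ s}).toReal
        = ∫ ω in {ω | (Y₀ ω, P ω, R ω) ∈ s}, convPMF N (Y₀ ω) (P ω) (R ω) m ∂μ)
    (hstat : Measure.map Y₁ μ = Measure.map Y₀ μ) :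
    (∫ ω, (Y₀ ω : ℝ) * (Y₁ ω : ℝ) ∂μ)
        - (∫ ω, (Y₀ ω : ℝ) ∂μ) * (∫ ω, (Y₁ ω : ℝ) ∂μ)
      = ((∫ ω, P ω ∂μ) + (∫ ω, R ω ∂μ) - 1) * (∫ ω, (Y₀ ω : ℝ) ^ 2 ∂μ)
        + (1 - ∫ ω, P ω ∂μ) * (N : ℝ) * (∫ ω, (Y₀ ω : ℝ) ∂μ)
        - (∫ ω, (Y₀ ω : ℝ) ∂μ) ^ 2 := by
  classical
  have hcast : Measurable fun n : ℕ => (n : ℝ) := measurable_from_top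
  have hA : ∀ k : ℕ, MeasurableSet {ω | Y₀ ω = k} := fun k => hY₀ (measurableSet_singleton k)
  have hB : ∀ m : ℕ, MeasurableSet {ω | Y₁ ω = m} := fun m => hY₁ (measurableSet_singleton m)
  -- Y₁ ≤ N a.e.
  have hY₁N : ∀ᵐ ω ∂μ, Y₁ ω ≤ N := by
    have hset : MeasurableSet {n : ℕ | N < n} := (Set.to_countable _).measurableSet
    have h0 : μ (Y₁ ⁻¹' {n | N < n}) = μ (Y₀ ⁻¹' {n | N < n}) := by
      rw [← Measure.map_apply hY₁ hset, hstat, Measure.map_apply hY₀ hset]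
    have h1 : Y₀ ⁻¹' {n : ℕ | N < n} = ∅ := by
      ext ω
      simp only [Set.mem_preimage, Set.mem_setOf_eq, Set.mem_empty_iff_false, iff_false, not_lt]
      exact hY₀N ω
    rw [h1, measure_empty] at h0
    refine (ae_iff).mpr ?_
    have : {ω | ¬ Y₁ ω ≤ N} = Y₁ ⁻¹' {n : ℕ | N < n} := by
      ext ω; simp [Nat.not_le]
    rw [this, h0]
  -- integrability from boundedness
  have bddInt : ∀ (f : Ω → ℝ) (C : ℝ), AEStronglyMeasurable f μ → (∀ᵐ ω ∂μ, ‖f ω‖ ≤ C) →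
      Integrable f μ := fun f C hm hb => ⟨hm, HasFiniteIntegral.of_bounded hb⟩
  have intP : Integrable P μ := by
    refine bddInt P 1 hP.aestronglyMeasurable (hPR.mono fun ω h => ?_)
    rw [Real.norm_eq_abs, abs_le]
    exact ⟨by linarith [h.1.1], by linarith [h.1.2]⟩
  have intR : Integrable R μ := by
    refine bddInt R 1 hR.aestronglyMeasurable (hPR.mono fun ω h => ?_)
    rw [Real.norm_eq_abs, abs_le]
    exact ⟨by linarith [h.2.1], by linarith [h.2.2]⟩
  -- E[Y₁] = E[Y₀]
  have hEY1 : (∫ ω, (Y₁ ω : ℝ) ∂μ) = ∫ ω, (Y₀ ω : ℝ) ∂μ := by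
    rw [← integral_map hY₁.aemeasurable hcast.aestronglyMeasurable, hstat,
      integral_map hY₀.aemeasurable hcast.aestronglyMeasurable]
  -- measurability of convPMF composed
  have hconv : ∀ (k m : ℕ), Measurable fun ω => convPMF N k (P ω) (R ω) m := by
    intro k m
    unfold convPMF binomPMF
    apply Finset.measurable_sum
    intro j _
    fun_prop
  -- the joint law as an integral
  have hmeasAB : ∀ k m : ℕ, (μ ({ω | Y₀ ω = k} ∩ {ω | Y₁ ω = m})).toReal
      = ∫ ω in {ω | Y₀ ω = k}, convPMF N k (P ω) (R ω) m ∂μ := by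
    intro k m
    have hs : MeasurableSet (({k} : Set ℕ) ×ˢ (Set.univ : Set (ℝ × ℝ))) :=
      (measurableSet_singleton k).prod MeasurableSet.univ
    have h1 := hcond m _ hs
    have e1 : {ω | Y₁ ω = m ∧ (Y₀ ω, P ω, R ω) ∈ (({k} : Set ℕ) ×ˢ (Set.univ : Set (ℝ × ℝ)))}
        = {ω | Y₀ ω = k} ∩ {ω | Y₁ ω = m} := by
      ext ω; simp [Set.mem_prod, and_comm, eq_comm]
    have e2 : {ω | (Y₀ ω, P ω, R ω) ∈ (({k} : Set ℕ) ×ˢ (Set.univ : Set (ℝ × ℝ)))}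
        = {ω | Y₀ ω = k} := by
      ext ω; simp [Set.mem_prod, eq_comm]
    rw [e1, e2] at h1
    rw [h1]
    exact setIntegral_congr_fun (hA k) fun ω hω => by
      simp only [Set.mem_setOf_eq] at hω; rw [hω]
  -- expanding the product integral
  have hIndInt : ∀ (k m : ℕ), Integrable
      (Set.indicator ({ω | Y₀ ω = k} ∩ {ω | Y₁ ω = m}) fun _ => (k:ℝ)*(m:ℝ)) μ :=
    fun k m => (integrable_const _).indicator ((hA k).inter (hB m))
  have key : ∫ ω, (Y₀ ω : ℝ) * (Y₁ ω : ℝ) ∂μ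
      = ∑ k ∈ Finset.range (N+1), ∑ m ∈ Finset.range (N+1),
          (k:ℝ) * (m:ℝ) * (μ ({ω | Y₀ ω = k} ∩ {ω | Y₁ ω = m})).toReal := by
    have hae : (fun ω => (Y₀ ω : ℝ) * (Y₁ ω : ℝ)) =ᵐ[μ]
        fun ω => ∑ k ∈ Finset.range (N+1), ∑ m ∈ Finset.range (N+1),
          Set.indicator ({ω' | Y₀ ω' = k} ∩ {ω' | Y₁ ω' = m}) (fun _ => (k:ℝ)*(m:ℝ)) ω := by
      filter_upwards [hY₁N] with ω hω
      have : ∑ k ∈ Finset.range (N+1), ∑ m ∈ Finset.range (N+1),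
          Set.indicator ({ω' | Y₀ ω' = k} ∩ {ω' | Y₁ ω' = m}) (fun _ => (k:ℝ)*(m:ℝ)) ω
          = (Y₀ ω : ℝ) * (Y₁ ω : ℝ) := by
        rw [Finset.sum_eq_single_of_mem (Y₀ ω)
            (Finset.mem_range.mpr (by have := hY₀N ω; omega))
            (fun k _ hk => Finset.sum_eq_zero fun m _ =>
              Set.indicator_of_notMem (fun hmem => hk hmem.1.symm) _),
          Finset.sum_eq_single_of_mem (Y₁ ω)
            (Finset.mem_range.mpr (by omega))
            (fun m _ hm => Set.indicator_of_notMem (fun hmem => hm hmem.2.symm) _),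
          Set.indicator_of_mem
            (show ω ∈ {ω' | Y₀ ω' = Y₀ ω} ∩ {ω' | Y₁ ω' = Y₁ ω} from ⟨rfl, rfl⟩) _]
      exact this.symm
    rw [integral_congr_ae hae,
      integral_finset_sum _ (fun k _ => integrable_finset_sum _ (fun m _ => hIndInt k m))]
    refine Finset.sum_congr rfl fun k _ => ?_
    rw [integral_finset_sum _ (fun m _ => hIndInt k m)]
    refine Finset.sum_congr rfl fun m _ => ?_
    rw [integral_indicator ((hA k).inter (hB m)), setIntegral_const, smul_eq_mul, measureReal_def]
    ring
  -- summing the conditional mean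
  have hsetInt : ∀ k : ℕ, k ≤ N → ∑ m ∈ Finset.range (N+1),
      (m:ℝ) * ∫ ω in {ω | Y₀ ω = k}, convPMF N k (P ω) (R ω) m ∂μ
      = ∫ ω in {ω | Y₀ ω = k}, ((k:ℝ) * R ω + ((N:ℝ) - (k:ℝ)) * (1 - P ω)) ∂μ := by
    intro k hk
    have hint : ∀ m : ℕ, Integrable (fun ω => (m:ℝ) * convPMF N k (P ω) (R ω) m)
        (μ.restrict {ω | Y₀ ω = k}) := by
      intro m
      refine ⟨((hconv k m).const_mul _).aestronglyMeasurable,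
        HasFiniteIntegral.of_bounded (C := (m:ℝ)) ?_⟩
      refine ae_restrict_of_ae (hPR.mono fun ω h => ?_)
      have h1 : 0 ≤ convPMF N k (P ω) (R ω) m :=
        convPMF_nonneg h.1.1.le h.1.2.le h.2.1.le h.2.2.le N k m
      have h2 : convPMF N k (P ω) (R ω) m ≤ 1 :=
        convPMF_le_one h.1.1.le h.1.2.le h.2.1.le h.2.2.le N k m
      rw [Real.norm_eq_abs, abs_of_nonneg (by positivity)]
      exact mul_le_of_le_one_right (Nat.cast_nonneg m) h2
    calc ∑ m ∈ Finset.range (N+1),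
          (m:ℝ) * ∫ ω in {ω | Y₀ ω = k}, convPMF N k (P ω) (R ω) m ∂μ
        = ∑ m ∈ Finset.range (N+1),
          ∫ ω in {ω | Y₀ ω = k}, (m:ℝ) * convPMF N k (P ω) (R ω) m ∂μ := by
          exact Finset.sum_congr rfl fun m _ => (integral_const_mul _ _).symm
      _ = ∫ ω in {ω | Y₀ ω = k}, ∑ m ∈ Finset.range (N+1),
            (m:ℝ) * convPMF N k (P ω) (R ω) m ∂μ :=
          (integral_finset_sum _ (fun m _ => hint m)).symm
      _ = ∫ ω in {ω | Y₀ ω = k}, ((k:ℝ) * R ω + ((N:ℝ) - (k:ℝ)) * (1 - P ω)) ∂μ := by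
          refine integral_congr_ae (Filter.Eventually.of_forall fun ω => ?_)
          simp only
          rw [convPMF_mean N k hk, Nat.cast_sub hk]
  -- reduce to an integral of a function of (Y₀, P, R)
  have intH : Integrable (fun ω => (Y₀ ω:ℝ)^2 * R ω
      + ((N:ℝ)*(Y₀ ω:ℝ) - (Y₀ ω:ℝ)^2) * (1 - P ω)) μ := by
    refine bddInt _ (2*(N:ℝ)^2) ?_ (hPR.mono fun ω h => ?_)
    · exact ((((hcast.comp hY₀).pow_const 2).mul hR).add
        ((((hcast.comp hY₀).const_mul _).sub ((hcast.comp hY₀).pow_const 2)).mul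
          (hP.const_sub 1))).aestronglyMeasurable
    · have hx0 : (0:ℝ) ≤ (Y₀ ω : ℝ) := Nat.cast_nonneg _
      have hxN : (Y₀ ω : ℝ) ≤ (N:ℝ) := Nat.cast_le.mpr (hY₀N ω)
      have hx2 : (Y₀ ω:ℝ)^2 ≤ (N:ℝ)^2 := by nlinarith
      have ht1a : 0 ≤ (Y₀ ω:ℝ)^2 * R ω := mul_nonneg (sq_nonneg _) h.2.1.le
      have ht1b : (Y₀ ω:ℝ)^2 * R ω ≤ (N:ℝ)^2 := by nlinarith [sq_nonneg (Y₀ ω:ℝ), h.2.2]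
      have ht2 : 0 ≤ (N:ℝ)*(Y₀ ω:ℝ) - (Y₀ ω:ℝ)^2 := by nlinarith
      have ht2b : (N:ℝ)*(Y₀ ω:ℝ) - (Y₀ ω:ℝ)^2 ≤ (N:ℝ)^2 := by nlinarith
      have ht3a : 0 ≤ ((N:ℝ)*(Y₀ ω:ℝ) - (Y₀ ω:ℝ)^2) * (1 - P ω) :=
        mul_nonneg ht2 (by linarith [h.1.2])
      have ht3b : ((N:ℝ)*(Y₀ ω:ℝ) - (Y₀ ω:ℝ)^2) * (1 - P ω) ≤ (N:ℝ)^2 := by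
        nlinarith [h.1.1, h.1.2]
      rw [Real.norm_eq_abs, abs_le]
      constructor <;> linarith
  have hg : ∫ ω, (Y₀ ω : ℝ) * (Y₁ ω : ℝ) ∂μ
      = ∫ ω, ((Y₀ ω:ℝ)^2 * R ω + ((N:ℝ)*(Y₀ ω:ℝ) - (Y₀ ω:ℝ)^2) * (1 - P ω)) ∂μ := by
    rw [key]
    have e : ∀ k ∈ Finset.range (N+1),
        ∑ m ∈ Finset.range (N+1), (k:ℝ)*(m:ℝ)*(μ ({ω | Y₀ ω = k} ∩ {ω | Y₁ ω = m})).toReal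
        = ∫ ω in {ω | Y₀ ω = k}, ((Y₀ ω:ℝ)^2 * R ω
            + ((N:ℝ)*(Y₀ ω:ℝ) - (Y₀ ω:ℝ)^2) * (1 - P ω)) ∂μ := by
      intro k hk
      rw [Finset.mem_range] at hk
      have hk' : k ≤ N := by omega
      calc ∑ m ∈ Finset.range (N+1),
            (k:ℝ)*(m:ℝ)*(μ ({ω | Y₀ ω = k} ∩ {ω | Y₁ ω = m})).toReal
          = (k:ℝ) * ∑ m ∈ Finset.range (N+1),
            (m:ℝ) * (μ ({ω | Y₀ ω = k} ∩ {ω | Y₁ ω = m})).toReal := by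
            rw [Finset.mul_sum]; exact Finset.sum_congr rfl fun m _ => by ring
        _ = (k:ℝ) * ∑ m ∈ Finset.range (N+1),
            (m:ℝ) * ∫ ω in {ω | Y₀ ω = k}, convPMF N k (P ω) (R ω) m ∂μ := by
            congr 1; exact Finset.sum_congr rfl fun m _ => by rw [hmeasAB k m]
        _ = (k:ℝ) * ∫ ω in {ω | Y₀ ω = k}, ((k:ℝ) * R ω + ((N:ℝ) - (k:ℝ)) * (1 - P ω)) ∂μ := by
            rw [hsetInt k hk']
        _ = ∫ ω in {ω | Y₀ ω = k},
            (k:ℝ) * ((k:ℝ) * R ω + ((N:ℝ) - (k:ℝ)) * (1 - P ω)) ∂μ :=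
            (integral_const_mul _ _).symm
        _ = ∫ ω in {ω | Y₀ ω = k}, ((Y₀ ω:ℝ)^2 * R ω
            + ((N:ℝ)*(Y₀ ω:ℝ) - (Y₀ ω:ℝ)^2) * (1 - P ω)) ∂μ := by
            refine setIntegral_congr_fun (hA k) fun ω hω => ?_
            simp only [Set.mem_setOf_eq] at hω
            rw [hω]; ring
    rw [Finset.sum_congr rfl e]
    have hUnion : ⋃ k ∈ Finset.range (N+1), {ω | Y₀ ω = k} = Set.univ := by
      ext ω
      simp only [Set.mem_iUnion, Finset.mem_range, Set.mem_setOf_eq, Set.mem_univ, iff_true]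
      exact ⟨Y₀ ω, by have := hY₀N ω; omega, rfl⟩
    rw [← integral_biUnion_finset (Finset.range (N+1)) (fun k _ => hA k)
        (fun i _ j _ hij => Set.disjoint_left.mpr fun ω h1 h2 => hij (h1 ▸ h2 ▸ rfl))
        (fun k _ => intH.integrableOn), hUnion, setIntegral_univ]
  -- independence computations
  have intY2 : Integrable (fun ω => (Y₀ ω:ℝ)^2) μ := by
    refine bddInt _ ((N:ℝ)^2) ((hcast.comp hY₀).pow_const 2).aestronglyMeasurable
      (Filter.Eventually.of_forall fun ω => ?_)
    have hx0 : (0:ℝ) ≤ (Y₀ ω : ℝ) := Nat.cast_nonneg _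
    have hxN : (Y₀ ω : ℝ) ≤ (N:ℝ) := Nat.cast_le.mpr (hY₀N ω)
    rw [Real.norm_eq_abs, abs_le]
    constructor <;> nlinarith
  have intY : Integrable (fun ω => (Y₀ ω:ℝ)) μ := by
    refine bddInt _ (N:ℝ) (hcast.comp hY₀).aestronglyMeasurable
      (Filter.Eventually.of_forall fun ω => ?_)
    rw [Real.norm_eq_abs, abs_of_nonneg (Nat.cast_nonneg _)]
    exact Nat.cast_le.mpr (hY₀N ω)
  have intF2 : Integrable (fun ω => (N:ℝ)*(Y₀ ω:ℝ) - (Y₀ ω:ℝ)^2) μ :=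
    (intY.const_mul _).sub intY2
  have int1mP : Integrable (fun ω => 1 - P ω) μ := (integrable_const 1).sub intP
  have e1 : ∫ ω, (Y₀ ω:ℝ)^2 * R ω ∂μ = (∫ ω, (Y₀ ω:ℝ)^2 ∂μ) * (∫ ω, R ω ∂μ) := by
    have hi1 : IndepFun ((fun n : ℕ => (n:ℝ)^2) ∘ Y₀)
        ((fun x : ℝ × ℝ => x.2) ∘ (fun ω => (P ω, R ω))) μ :=
      hindep.comp measurable_from_top measurable_snd
    exact hi1.integral_mul_eq_mul_integral intY2.aestronglyMeasurable intR.aestronglyMeasurable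
  have e2 : ∫ ω, ((N:ℝ)*(Y₀ ω:ℝ) - (Y₀ ω:ℝ)^2) * (1 - P ω) ∂μ
      = (∫ ω, ((N:ℝ)*(Y₀ ω:ℝ) - (Y₀ ω:ℝ)^2) ∂μ) * (∫ ω, (1 - P ω) ∂μ) := by
    have hi2 : IndepFun ((fun n : ℕ => (N:ℝ)*(n:ℝ) - (n:ℝ)^2) ∘ Y₀)
        ((fun x : ℝ × ℝ => 1 - x.1) ∘ (fun ω => (P ω, R ω))) μ :=
      hindep.comp measurable_from_top (measurable_fst.const_sub 1)
    exact hi2.integral_mul_eq_mul_integral intF2.aestronglyMeasurable int1mP.aestronglyMeasurable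
  have e3 : ∫ ω, ((N:ℝ)*(Y₀ ω:ℝ) - (Y₀ ω:ℝ)^2) ∂μ
      = (N:ℝ) * (∫ ω, (Y₀ ω:ℝ) ∂μ) - ∫ ω, (Y₀ ω:ℝ)^2 ∂μ := by
    rw [integral_sub (intY.const_mul _) intY2, integral_const_mul]
  have e4 : ∫ ω, (1 - P ω) ∂μ = 1 - ∫ ω, P ω ∂μ := by
    rw [integral_sub (integrable_const 1) intP]
    simp
  have intProd1 : Integrable (fun ω => (Y₀ ω:ℝ)^2 * R ω) μ := by
    refine bddInt _ ((N:ℝ)^2) (((hcast.comp hY₀).pow_const 2).mul hR).aestronglyMeasurable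
      (hPR.mono fun ω h => ?_)
    have hx0 : (0:ℝ) ≤ (Y₀ ω : ℝ) := Nat.cast_nonneg _
    have hxN : (Y₀ ω : ℝ) ≤ (N:ℝ) := Nat.cast_le.mpr (hY₀N ω)
    have ht1a : 0 ≤ (Y₀ ω:ℝ)^2 * R ω := mul_nonneg (sq_nonneg _) h.2.1.le
    have ht1b : (Y₀ ω:ℝ)^2 * R ω ≤ (N:ℝ)^2 := by nlinarith [sq_nonneg (Y₀ ω:ℝ), h.2.2]
    rw [Real.norm_eq_abs, abs_le]
    constructor <;> linarith [sq_nonneg (N:ℝ)]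
  have intProd2 : Integrable (fun ω => ((N:ℝ)*(Y₀ ω:ℝ) - (Y₀ ω:ℝ)^2) * (1 - P ω)) μ := by
    refine bddInt _ ((N:ℝ)^2)
      ((((hcast.comp hY₀).const_mul _).sub ((hcast.comp hY₀).pow_const 2)).mul
        (hP.const_sub 1)).aestronglyMeasurable (hPR.mono fun ω h => ?_)
    have hx0 : (0:ℝ) ≤ (Y₀ ω : ℝ) := Nat.cast_nonneg _
    have hxN : (Y₀ ω : ℝ) ≤ (N:ℝ) := Nat.cast_le.mpr (hY₀N ω)
    have ht2 : 0 ≤ (N:ℝ)*(Y₀ ω:ℝ) - (Y₀ ω:ℝ)^2 := by nlinarith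
    have ht2b : (N:ℝ)*(Y₀ ω:ℝ) - (Y₀ ω:ℝ)^2 ≤ (N:ℝ)^2 := by nlinarith
    have ht3a : 0 ≤ ((N:ℝ)*(Y₀ ω:ℝ) - (Y₀ ω:ℝ)^2) * (1 - P ω) :=
      mul_nonneg ht2 (by linarith [h.1.2])
    have ht3b : ((N:ℝ)*(Y₀ ω:ℝ) - (Y₀ ω:ℝ)^2) * (1 - P ω) ≤ (N:ℝ)^2 := by
      nlinarith [h.1.1, h.1.2]
    rw [Real.norm_eq_abs, abs_le]
    constructor <;> linarith [sq_nonneg (N:ℝ)]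
  rw [hg, integral_add intProd1 intProd2, e1, e2, e3, e4, hEY1]
  ring
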